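/- If 0 < m ≤ M, A and B are positive invertible operators with mI ≤ A ≤ MI and mI ≤ B ≤ MI, then (1/√K(h))(A ∇ B) ≤ A ♯ B ≤ √K(h) (A ! B), where h = M/m and K(x) = (1+x)²/(4x) is the Kantorovich constant. -/

import Mathlib

open scoped ComplexOrder

/-- `A ^ r` for a Hermitian matrix, via the continuous functional calculus. -/
noncomputable def mpow {n : ℕ} (A : Matrix (Fin n) (Fin n) ℂ) (r : ℝ) : Matrix (Fin n) (Fin n) ℂ :=
  cfc (fun x : ℝ => x ^ r) A

/-- The β-weighted operator geometric mean `A ♯_β B = A^{1/2}(A^{-1/2} B A^{-1/2})^β A^{1/2}`. -/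
noncomputable def geomMean {n : ℕ} (A B : Matrix (Fin n) (Fin n) ℂ) (β : ℝ) :
    Matrix (Fin n) (Fin n) ℂ :=
  mpow A (1/2) * mpow (mpow A (-(1/2)) * B * mpow A (-(1/2))) β * mpow A (1/2)

/-- The α-weighted operator harmonic mean `A !_α B = ((1-α)A⁻¹ + αB⁻¹)⁻¹`. -/
noncomputable def harmMean {n : ℕ} (A B : Matrix (Fin n) (Fin n) ℂ) (α : ℝ) :
    Matrix (Fin n) (Fin n) ℂ :=
  ((1 - α) • A⁻¹ + α • B⁻¹)⁻¹

variable {n : ℕ}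

lemma specCont (f : ℝ → ℝ) (A : Matrix (Fin n) (Fin n) ℂ) :
    ContinuousOn f (spectrum ℝ A) := by
  rw [continuousOn_iff_continuous_restrict]
  exact continuous_of_discreteTopology

lemma psd_cfc {A : Matrix (Fin n) (Fin n) ℂ} (hA : A.IsHermitian) {f : ℝ → ℝ}
    (hf : ∀ x ∈ spectrum ℝ A, 0 ≤ f x) : (cfc f A).PosSemidef := by
  rw [hA.cfc_eq, Matrix.IsHermitian.cfc]
  rw [Unitary.conjStarAlgAut_apply, Matrix.star_eq_conjTranspose]
  refine Matrix.PosSemidef.mul_mul_conjTranspose_same ?_ _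
  refine Matrix.posSemidef_diagonal_iff.mpr fun i => ?_
  have := hf _ (hA.eigenvalues_mem_spectrum_real i)
  simpa using this

lemma psd_cfc_sub {A : Matrix (Fin n) (Fin n) ℂ} (hA : A.IsHermitian) {f g : ℝ → ℝ}
    (hf : ∀ x ∈ spectrum ℝ A, g x ≤ f x) : (cfc f A - cfc g A).PosSemidef := by
  rw [← cfc_sub f g A (specCont f A) (specCont g A)]
  exact psd_cfc hA fun x hx => sub_nonneg.mpr (hf x hx)

lemma spec_le_of_psd {C : Matrix (Fin n) (Fin n) ℂ} {c : ℝ}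
    (h : (c • (1 : Matrix (Fin n) (Fin n) ℂ) - C).PosSemidef) :
    ∀ x ∈ spectrum ℝ C, x ≤ c := by
  intro x hx
  have h1 : c - x ∈ spectrum ℝ (algebraMap ℝ (Matrix (Fin n) (Fin n) ℂ) c - C) := by
    rw [← spectrum.singleton_sub_eq]
    exact Set.sub_mem_sub rfl hx
  rw [Algebra.algebraMap_eq_smul_one] at h1
  rw [h.isHermitian.spectrum_real_eq_range_eigenvalues] at h1
  obtain ⟨i, hi⟩ := h1
  have := h.eigenvalues_nonneg i
  rw [hi] at this
  linarith

lemma spec_ge_of_psd {C : Matrix (Fin n) (Fin n) ℂ} {c : ℝ}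
    (h : (C - c • (1 : Matrix (Fin n) (Fin n) ℂ)).PosSemidef) :
    ∀ x ∈ spectrum ℝ C, c ≤ x := by
  intro x hx
  have h1 : x - c ∈ spectrum ℝ (C - algebraMap ℝ (Matrix (Fin n) (Fin n) ℂ) c) := by
    rw [← spectrum.sub_singleton_eq]
    exact Set.sub_mem_sub hx rfl
  rw [Algebra.algebraMap_eq_smul_one] at h1
  rw [h.isHermitian.spectrum_real_eq_range_eigenvalues] at h1
  obtain ⟨i, hi⟩ := h1
  have := h.eigenvalues_nonneg i
  rw [hi] at this
  linarith

lemma scalar_key {h x : ℝ} (hh : 1 ≤ h) (hx1 : h⁻¹ ≤ x) (hx2 : x ≤ h) :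
    1 + x ≤ 2 * Real.sqrt ((1 + h) ^ 2 / (4 * h)) * Real.sqrt x := by
  have hh0 : 0 < h := lt_of_lt_of_le one_pos hh
  have hx0 : 0 < x := lt_of_lt_of_le (inv_pos.mpr hh0) hx1
  have hk : Real.sqrt ((1 + h) ^ 2 / (4 * h)) = (1 + h) / (2 * Real.sqrt h) := by
    rw [show (1 + h) ^ 2 / (4 * h) = ((1 + h) / (2 * Real.sqrt h)) ^ 2 by
      rw [div_pow, mul_pow, Real.sq_sqrt hh0.le]; norm_num]
    exact Real.sqrt_sq (by positivity)
  set s := Real.sqrt h with hs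
  set t := Real.sqrt x with ht
  have hs0 : 0 < s := Real.sqrt_pos.mpr hh0
  have ht0 : 0 < t := Real.sqrt_pos.mpr hx0
  have hs2 : s ^ 2 = h := Real.sq_sqrt hh0.le
  have ht2 : t ^ 2 = x := Real.sq_sqrt hx0.le
  have hts : t ≤ s := Real.sqrt_le_sqrt hx2
  have hst1 : 1 ≤ s * t := by
    have h2 : s⁻¹ ≤ t := by rw [hs, ← Real.sqrt_inv]; exact Real.sqrt_le_sqrt hx1
    have h3 := mul_le_mul_of_nonneg_left h2 hs0.le
    rwa [mul_inv_cancel₀ hs0.ne'] at h3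
  rw [hk]
  rw [show 2 * ((1 + h) / (2 * s)) * t = (1 + h) * t / s by field_simp]
  rw [le_div_iff₀ hs0]
  nlinarith [mul_nonneg (sub_nonneg.mpr hts) (sub_nonneg.mpr hst1)]

/-- Kantorovich-constant sandwich: `(1/√K(h))(A ∇ B) ≤ A ♯ B ≤ √K(h)(A ! B)` for
`mI ≤ A, B ≤ MI`, `h = M/m`, `K(x) = (1+x)²/(4x)`. -/
theorem kantorovich_sandwich {n : ℕ} (A B : Matrix (Fin n) (Fin n) ℂ) (m M : ℝ)
    (hA : A.PosDef) (hB : B.PosDef) (hm : 0 < m) (hmM : m ≤ M)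
    (hAm : (A - m • (1 : Matrix (Fin n) (Fin n) ℂ)).PosSemidef)
    (hAM : (M • (1 : Matrix (Fin n) (Fin n) ℂ) - A).PosSemidef)
    (hBm : (B - m • (1 : Matrix (Fin n) (Fin n) ℂ)).PosSemidef)
    (hBM : (M • (1 : Matrix (Fin n) (Fin n) ℂ) - B).PosSemidef) :
    (geomMean A B (1/2) -
        (Real.sqrt ((1 + M / m) ^ 2 / (4 * (M / m))))⁻¹
          • ((1/2 : ℝ) • A + (1/2 : ℝ) • B)).PosSemidef ∧
    (Real.sqrt ((1 + M / m) ^ 2 / (4 * (M / m)))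
        • harmMean A B (1/2) - geomMean A B (1/2)).PosSemidef := by
  have hM0 : 0 < M := lt_of_lt_of_le hm hmM
  have hh1 : (1 : ℝ) ≤ M / m := (one_le_div hm).mpr hmM
  set k := Real.sqrt ((1 + M / m) ^ 2 / (4 * (M / m))) with hkdef
  have hk0 : 0 < k := Real.sqrt_pos.mpr (by positivity)
  have hAH : A.IsHermitian := hA.1
  have hAsa : IsSelfAdjoint A := hAH.isSelfAdjoint
  have hAub := spec_le_of_psd hAM
  have hAlb := spec_ge_of_psd hAm
  have hApos : ∀ x ∈ spectrum ℝ A, 0 < x := fun x hx => lt_of_lt_of_le hm (hAlb x hx)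
  set S := mpow A (1/2) with hSdef
  set Si := mpow A (-(1/2)) with hSidef
  have hScfc : S = cfc (fun x : ℝ => x ^ ((1:ℝ)/2)) A := by rw [hSdef, mpow]
  have hSicfc : Si = cfc (fun x : ℝ => x ^ (-((1:ℝ)/2))) A := by rw [hSidef, mpow]
  have hSsa : IsSelfAdjoint S := hScfc ▸ cfc_predicate _ A
  have hSH : S.IsHermitian := hSsa
  have hSisa : IsSelfAdjoint Si := hSicfc ▸ cfc_predicate _ A
  have hSiH : Si.IsHermitian := hSisa
  have hSSi : S * Si = 1 := by
    rw [hScfc, hSicfc, ← cfc_mul _ _ A (specCont _ _) (specCont _ _)]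
    rw [cfc_congr (g := fun _ : ℝ => (1:ℝ)) fun x hx => by
      rw [← Real.rpow_add (hApos x hx), show (1:ℝ)/2 + -((1:ℝ)/2) = 0 by ring, Real.rpow_zero]]
    exact cfc_const_one ℝ A hAsa
  have hSiS : Si * S = 1 := by
    rw [hScfc, hSicfc, ← cfc_mul _ _ A (specCont _ _) (specCont _ _)]
    rw [cfc_congr (g := fun _ : ℝ => (1:ℝ)) fun x hx => by
      rw [← Real.rpow_add (hApos x hx), show -((1:ℝ)/2) + (1:ℝ)/2 = 0 by ring, Real.rpow_zero]]
    exact cfc_const_one ℝ A hAsa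
  have hSS : S * S = A := by
    rw [hScfc, ← cfc_mul _ _ A (specCont _ _) (specCont _ _)]
    rw [cfc_congr (g := fun x : ℝ => x) fun x hx => by
      rw [← Real.rpow_add (hApos x hx), show (1:ℝ)/2 + (1:ℝ)/2 = 1 by ring, Real.rpow_one]]
    exact cfc_id' ℝ A
  have hSiSi : Si * Si = cfc (fun x : ℝ => x⁻¹) A := by
    rw [hSicfc, ← cfc_mul _ _ A (specCont _ _) (specCont _ _)]
    exact cfc_congr fun x hx => by
      rw [← Real.rpow_add (hApos x hx), show -((1:ℝ)/2) + -((1:ℝ)/2) = -1 by ring,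
        Real.rpow_neg_one]
  set C := Si * B * Si with hCdef
  have hCH : C.IsHermitian := by
    have := Matrix.isHermitian_conjTranspose_mul_mul Si hB.1
    rwa [hSiH.eq] at this
  have hCsa : IsSelfAdjoint C := hCH.isSelfAdjoint
  -- upper bound for C
  have hCub : ((M/m) • (1 : Matrix (Fin n) (Fin n) ℂ) - C).PosSemidef := by
    have hconjM : (Si * (M • (1 : Matrix (Fin n) (Fin n) ℂ) - B) * Si).PosSemidef := by
      have := hBM.mul_mul_conjTranspose_same Si
      rwa [hSiH.eq] at this
    have hid1 : Si * (M • (1 : Matrix (Fin n) (Fin n) ℂ) - B) * Si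
        = M • (Si * Si) - C := by
      rw [mul_sub, sub_mul, mul_smul_comm, smul_mul_assoc, mul_one, hCdef]
    have e : (M/m) • (1 : Matrix (Fin n) (Fin n) ℂ) - C
        = (cfc (fun _ : ℝ => M/m) A - cfc (fun x : ℝ => M * x⁻¹) A)
            + Si * (M • (1 : Matrix (Fin n) (Fin n) ℂ) - B) * Si := by
      rw [hid1, hSiSi, cfc_const_mul M _ A (specCont _ _),
        cfc_const (M/m) A hAsa, Algebra.algebraMap_eq_smul_one]
      abel
    rw [e]
    refine (psd_cfc_sub hAH fun x hx => ?_).add hconjM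
    have h1 := hAlb x hx
    have h2 := hApos x hx
    rw [div_eq_mul_inv]
    gcongr
  have hClb : (C - (m/M) • (1 : Matrix (Fin n) (Fin n) ℂ)).PosSemidef := by
    have hconjm : (Si * (B - m • (1 : Matrix (Fin n) (Fin n) ℂ)) * Si).PosSemidef := by
      have := hBm.mul_mul_conjTranspose_same Si
      rwa [hSiH.eq] at this
    have hid1 : Si * (B - m • (1 : Matrix (Fin n) (Fin n) ℂ)) * Si
        = C - m • (Si * Si) := by
      rw [mul_sub, sub_mul, mul_smul_comm, smul_mul_assoc, mul_one, hCdef]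
    have e : C - (m/M) • (1 : Matrix (Fin n) (Fin n) ℂ)
        = (cfc (fun x : ℝ => m * x⁻¹) A - cfc (fun _ : ℝ => m/M) A)
            + Si * (B - m • (1 : Matrix (Fin n) (Fin n) ℂ)) * Si := by
      rw [hid1, hSiSi, cfc_const_mul m _ A (specCont _ _),
        cfc_const (m/M) A hAsa, Algebra.algebraMap_eq_smul_one]
      abel
    rw [e]
    refine (psd_cfc_sub hAH fun x hx => ?_).add hconjm
    have h1 := hAub x hx
    have h2 := hApos x hx
    rw [div_eq_mul_inv]
    gcongr
  have hCub' := spec_le_of_psd hCub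
  have hClb' := spec_ge_of_psd hClb
  have hCpos : ∀ x ∈ spectrum ℝ C, 0 < x := fun x hx =>
    lt_of_lt_of_le (by positivity) (hClb' x hx)
  -- inverses
  have hCinv_mul : C * cfc (fun x : ℝ => x⁻¹) C = 1 := by
    have h1 : C * cfc (fun x : ℝ => x⁻¹) C
        = cfc (fun x : ℝ => x) C * cfc (fun x : ℝ => x⁻¹) C := by
      rw [cfc_id' ℝ C hCsa]
    rw [h1, ← cfc_mul _ _ C (specCont _ _) (specCont _ _)]
    rw [cfc_congr (g := fun _ : ℝ => (1:ℝ)) fun x hx => mul_inv_cancel₀ (hCpos x hx).ne']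
    exact cfc_const_one ℝ C hCsa
  have hCinv : C⁻¹ = cfc (fun x : ℝ => x⁻¹) C := Matrix.inv_eq_right_inv hCinv_mul
  have hCCinv : C * C⁻¹ = 1 := by rw [hCinv]; exact hCinv_mul
  have hAinv : A⁻¹ = Si * Si := Matrix.inv_eq_right_inv (by
    rw [← hSS, show S * S * (Si * Si) = S * ((S * Si) * Si) by simp only [mul_assoc], hSSi, one_mul, hSSi])
  have hBfac : S * C * S = B := by
    rw [hCdef, show S * (Si * B * Si) * S = (S * Si) * B * (Si * S) by simp only [mul_assoc],
      hSSi, hSiS, one_mul, mul_one]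
  have hBinv : B⁻¹ = Si * C⁻¹ * Si := Matrix.inv_eq_right_inv (by
    rw [← hBfac, show S * C * S * (Si * C⁻¹ * Si) = S * ((C * ((S * Si) * C⁻¹)) * Si) by
      simp only [mul_assoc], hSSi, one_mul, hCCinv, one_mul, hSSi])
  -- geometric mean
  have hgeom : geomMean A B (1/2) = S * cfc (fun x : ℝ => x ^ ((1:ℝ)/2)) C * S := by
    rw [geomMean, ← hSdef, ← hSidef, ← hCdef, mpow]
  -- the two scalar inequalities on the spectrum of C
  have hscalar : ∀ x ∈ spectrum ℝ C, 1 + x ≤ 2 * k * Real.sqrt x := by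
    intro x hx
    refine scalar_key hh1 ?_ (hCub' x hx)
    rw [inv_div]
    exact hClb' x hx
  constructor
  · -- first inequality
    have hA1 : A = S * cfc (fun _ : ℝ => (1:ℝ)) C * S := by
      rw [cfc_const_one ℝ C hCsa, mul_one]; exact hSS.symm
    have hB1 : B = S * cfc (fun x : ℝ => x) C * S := by
      rw [cfc_id' ℝ C hCsa]; exact hBfac.symm
    rw [hgeom, hA1, hB1]
    have hcollect : k⁻¹ • ((1/2 : ℝ) • (S * cfc (fun _ : ℝ => (1:ℝ)) C * S)
          + (1/2 : ℝ) • (S * cfc (fun x : ℝ => x) C * S))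
        = S * cfc (fun x : ℝ => k⁻¹ * ((1 + x)/2)) C * S := by
      have hinner : cfc (fun x : ℝ => k⁻¹ * ((1 + x)/2)) C
          = k⁻¹ • ((1/2 : ℝ) • cfc (fun _ : ℝ => (1:ℝ)) C
              + (1/2 : ℝ) • cfc (fun x : ℝ => x) C) := by
        rw [← cfc_const_mul ((1:ℝ)/2) _ C (specCont _ _),
          ← cfc_const_mul ((1:ℝ)/2) _ C (specCont _ _),
          ← cfc_add C _ _ (specCont _ _) (specCont _ _),
          ← cfc_const_mul k⁻¹ _ C (specCont _ _)]
        exact cfc_congr fun x _ => by ring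
      rw [hinner]
      simp only [smul_add, mul_smul_comm, smul_mul_assoc, mul_add, add_mul]
    rw [hcollect, show S * cfc (fun x : ℝ => x ^ ((1:ℝ)/2)) C * S
        - S * cfc (fun x : ℝ => k⁻¹ * ((1 + x)/2)) C * S
        = S * (cfc (fun x : ℝ => x ^ ((1:ℝ)/2)) C
            - cfc (fun x : ℝ => k⁻¹ * ((1 + x)/2)) C) * S by rw [mul_sub, sub_mul]]
    have hZ : (cfc (fun x : ℝ => x ^ ((1:ℝ)/2)) C
        - cfc (fun x : ℝ => k⁻¹ * ((1 + x)/2)) C).PosSemidef := by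
      refine psd_cfc_sub hCH fun x hx => ?_
      have h1 := hscalar x hx
      have hx0 := hCpos x hx
      rw [← Real.sqrt_eq_rpow, show k⁻¹ * ((1 + x)/2) = (1 + x)/(2 * k) by
        rw [inv_mul_eq_div, div_div], div_le_iff₀ (by positivity)]
      nlinarith [h1]
    have := hZ.mul_mul_conjTranspose_same S
    rwa [hSH.eq] at this
  · -- second inequality
    have hD : ((1 : ℝ) - 1/2) • A⁻¹ + (1/2 : ℝ) • B⁻¹
        = Si * cfc (fun x : ℝ => (1 + x⁻¹)/2) C * Si := by
      have h1 : cfc (fun x : ℝ => (1 + x⁻¹)/2) C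
          = (1/2 : ℝ) • cfc (fun _ : ℝ => (1:ℝ)) C + (1/2 : ℝ) • cfc (fun x : ℝ => x⁻¹) C := by
        rw [← cfc_const_mul ((1:ℝ)/2) _ C (specCont _ _),
          ← cfc_const_mul ((1:ℝ)/2) _ C (specCont _ _),
          ← cfc_add C _ _ (specCont _ _) (specCont _ _)]
        exact cfc_congr fun x _ => by ring
      rw [h1, hAinv, hBinv, hCinv, cfc_const_one ℝ C hCsa]
      simp only [smul_add, mul_add, add_mul, mul_smul_comm, smul_mul_assoc, mul_one, one_mul]
      rw [show (1 : ℝ) - 1/2 = 1/2 by norm_num]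
    have hprod_pos : ∀ x ∈ spectrum ℝ C, (0:ℝ) < (1 + x⁻¹)/2 := fun x hx => by
      have := hCpos x hx; positivity
    have hDinv_mul : (Si * cfc (fun x : ℝ => (1 + x⁻¹)/2) C * Si)
        * (S * cfc (fun x : ℝ => ((1 + x⁻¹)/2)⁻¹) C * S) = 1 := by
      rw [show (Si * cfc (fun x : ℝ => (1 + x⁻¹)/2) C * Si)
            * (S * cfc (fun x : ℝ => ((1 + x⁻¹)/2)⁻¹) C * S)
          = Si * ((cfc (fun x : ℝ => (1 + x⁻¹)/2) C * ((Si * S)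
              * cfc (fun x : ℝ => ((1 + x⁻¹)/2)⁻¹) C)) * S) by simp only [mul_assoc],
        hSiS, one_mul, ← cfc_mul _ _ C (specCont _ _) (specCont _ _)]
      rw [cfc_congr (g := fun _ : ℝ => (1:ℝ)) fun x hx => mul_inv_cancel₀ (hprod_pos x hx).ne']
      rw [cfc_const_one ℝ C hCsa, one_mul, hSiS]
    have hharm : harmMean A B (1/2) = S * cfc (fun x : ℝ => ((1 + x⁻¹)/2)⁻¹) C * S := by
      rw [harmMean, hD]
      exact Matrix.inv_eq_right_inv hDinv_mul
    rw [hharm, hgeom]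
    rw [show k • (S * cfc (fun x : ℝ => ((1 + x⁻¹)/2)⁻¹) C * S)
        = S * (cfc (fun x : ℝ => k * ((1 + x⁻¹)/2)⁻¹) C) * S by
      rw [cfc_const_mul k _ C (specCont _ _), mul_smul_comm, smul_mul_assoc]]
    rw [show S * cfc (fun x : ℝ => k * ((1 + x⁻¹)/2)⁻¹) C * S
        - S * cfc (fun x : ℝ => x ^ ((1:ℝ)/2)) C * S
        = S * (cfc (fun x : ℝ => k * ((1 + x⁻¹)/2)⁻¹) C
            - cfc (fun x : ℝ => x ^ ((1:ℝ)/2)) C) * S by rw [mul_sub, sub_mul]]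
    have hZ : (cfc (fun x : ℝ => k * ((1 + x⁻¹)/2)⁻¹) C
        - cfc (fun x : ℝ => x ^ ((1:ℝ)/2)) C).PosSemidef := by
      refine psd_cfc_sub hCH fun x hx => ?_
      have h1 := hscalar x hx
      have hx0 := hCpos x hx
      have h1x : (0:ℝ) < 1 + x := by positivity
      rw [← Real.sqrt_eq_rpow, show (1 + x⁻¹)/2 = (1 + x)/(2 * x) by
        field_simp; ring, inv_div, show k * (2 * x / (1 + x)) = 2 * k * x / (1 + x) by ring,
        le_div_iff₀ h1x]
      nlinarith [mul_le_mul_of_nonneg_left h1 (Real.sqrt_nonneg x), Real.sq_sqrt hx0.le,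
        Real.sqrt_nonneg x]
    have := hZ.mul_mul_conjTranspose_same S
    rwa [hSH.eq] at this
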